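/- Let G : ℝ^{m×r} → ℝ be differentiable with L̃-Lipschitz gradient in the Frobenius norm, let ε > 0, let B ∈ ℝ^{m×r}, and let U ∈ ℝ^{m×r} be a random matrix whose entries are i.i.d. standard normal. Define ∇̂G(B) := ((G(B + εU) − G(B − εU)) / (2ε)) · U. Then E_U ‖∇̂G(B)‖_F² ≤ 6 m r ‖∇G(B)‖_F² + 64 L̃² m³ r³ ε². -/

import Mathlib

open MeasureTheory ProbabilityTheory Matrix
open scoped BigOperators

noncomputable section

attribute [local instance] Matrix.frobeniusNormedAddCommGroup Matrix.frobeniusNormedSpace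

instance (m n : ℕ) : MeasurableSpace (Matrix (Fin m) (Fin n) ℝ) := MeasurableSpace.pi

/-- Frobenius inner product `⟨A,B⟩_F = tr(A Bᵀ)`. -/
def finner {m n : ℕ} (A B : Matrix (Fin m) (Fin n) ℝ) : ℝ := (A * Bᵀ).trace

/-- `H ↦ ⟨G,H⟩_F` as a linear map. -/
def finnerLM {m n : ℕ} (G : Matrix (Fin m) (Fin n) ℝ) :
    Matrix (Fin m) (Fin n) ℝ →ₗ[ℝ] ℝ where
  toFun H := finner G H
  map_add' A B := by simp [finner, Matrix.transpose_add, Matrix.mul_add]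
  map_smul' c A := by simp [finner, Matrix.transpose_smul, Matrix.mul_smul]

/-- `H ↦ ⟨G,H⟩_F` as a continuous linear map; `HasFDerivAt F (finnerCLM G) X` says that
`G` is the gradient of `F` at `X` with respect to the Frobenius inner product. -/
def finnerCLM {m n : ℕ} (G : Matrix (Fin m) (Fin n) ℝ) :
    Matrix (Fin m) (Fin n) ℝ →L[ℝ] ℝ :=
  LinearMap.toContinuousLinearMap (finnerLM G)

/-- Law of an `m × r` random matrix with i.i.d. standard normal entries. -/
def gaussMat (m r : ℕ) : Measure (Matrix (Fin m) (Fin r) ℝ) :=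
  Measure.pi fun _ : Fin m => Measure.pi fun _ : Fin r => gaussianReal 0 1



section Aux

open Real Fintype MeasureTheory.Measure
open scoped ENNReal NNReal

lemma aux_int_pow_exp (k : ℕ) :
    Integrable (fun x : ℝ => x ^ k * Real.exp (-(2⁻¹ : ℝ) * x ^ 2)) := by
  have h : (-1 : ℝ) < (k : ℝ) := lt_of_lt_of_le (by norm_num) (Nat.cast_nonneg k)
  simpa [Real.rpow_natCast] using
    integrable_rpow_mul_exp_neg_mul_sq (b := (2⁻¹ : ℝ)) (by norm_num) h

lemma aux_deriv (k : ℕ) (x : ℝ) :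
    HasDerivAt (fun x : ℝ => x ^ (k+1) * Real.exp (-(2⁻¹ : ℝ) * x ^ 2))
      ((k+1 : ℝ) * (x ^ k * Real.exp (-(2⁻¹ : ℝ) * x ^ 2))
        - x ^ (k+2) * Real.exp (-(2⁻¹ : ℝ) * x ^ 2)) x := by
  have h1 : HasDerivAt (fun x : ℝ => x ^ (k+1)) ((k+1 : ℝ) * x ^ k) x := by
    simpa using hasDerivAt_pow (k+1) x
  have h2 : HasDerivAt (fun x : ℝ => Real.exp (-(2⁻¹ : ℝ) * x ^ 2))
      (Real.exp (-(2⁻¹ : ℝ) * x ^ 2) * (-(2⁻¹ : ℝ) * (2 * x))) x := by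
    have h3 : HasDerivAt (fun x : ℝ => -(2⁻¹ : ℝ) * x ^ 2) (-(2⁻¹ : ℝ) * (2 * x)) x := by
      simpa [mul_comm] using (hasDerivAt_pow 2 x).const_mul (-(2⁻¹ : ℝ))
    exact h3.exp
  exact (h1.fun_mul h2).congr_deriv (by ring)

lemma aux_J_rec (k : ℕ) :
    ∫ x : ℝ, x ^ (k+2) * Real.exp (-(2⁻¹ : ℝ) * x ^ 2)
      = (k+1 : ℝ) * ∫ x : ℝ, x ^ k * Real.exp (-(2⁻¹ : ℝ) * x ^ 2) := by
  have h0 := integral_eq_zero_of_hasDerivAt_of_integrable (aux_deriv k)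
    (((aux_int_pow_exp k).const_mul (k+1 : ℝ)).sub (aux_int_pow_exp (k+2)))
    (aux_int_pow_exp (k+1))
  rw [integral_sub ((aux_int_pow_exp k).const_mul (k+1 : ℝ)) (aux_int_pow_exp (k+2)),
    MeasureTheory.integral_const_mul] at h0
  linarith

lemma aux_J0 : ∫ x : ℝ, Real.exp (-(2⁻¹ : ℝ) * x ^ 2) = Real.sqrt (2 * π) := by
  have := integral_gaussian (2⁻¹ : ℝ)
  rw [show π / (2⁻¹ : ℝ) = 2 * π by ring] at this
  exact this

lemma aux_J1 : ∫ x : ℝ, x ^ 1 * Real.exp (-(2⁻¹ : ℝ) * x ^ 2) = 0 := by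
  have hd : ∀ x : ℝ, HasDerivAt (fun x : ℝ => -Real.exp (-(2⁻¹ : ℝ) * x ^ 2))
      (x ^ 1 * Real.exp (-(2⁻¹ : ℝ) * x ^ 2)) x := by
    intro x
    have h3 : HasDerivAt (fun x : ℝ => -(2⁻¹ : ℝ) * x ^ 2) (-(2⁻¹ : ℝ) * (2 * x)) x := by
      simpa [mul_comm] using (hasDerivAt_pow 2 x).const_mul (-(2⁻¹ : ℝ))
    have := (h3.exp).fun_neg
    exact this.congr_deriv (by ring)
  exact integral_eq_zero_of_hasDerivAt_of_integrable hd (aux_int_pow_exp 1)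
    (integrable_exp_neg_mul_sq (by norm_num)).neg

lemma aux_pdf (x : ℝ) :
    gaussianPDFReal 0 1 x = (Real.sqrt (2 * π))⁻¹ * Real.exp (-(2⁻¹ : ℝ) * x ^ 2) := by
  rw [gaussianPDFReal]
  have h1 : -(x - 0) ^ 2 / (2 * ((1:ℝ≥0):ℝ)) = -(2⁻¹ : ℝ) * x ^ 2 := by
    push_cast; ring
  rw [h1]
  norm_num

lemma aux_gauss_integral (f : ℝ → ℝ) :
    ∫ x, f x ∂(gaussianReal 0 1)
      = ∫ x, gaussianPDFReal 0 1 x * f x := by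
  rw [gaussianReal_of_var_ne_zero 0 one_ne_zero]
  have hm : Measurable fun x => (gaussianPDFReal 0 1 x).toNNReal :=
    (measurable_gaussianPDFReal 0 1).real_toNNReal
  have : gaussianPDF 0 1 = fun x => ((gaussianPDFReal 0 1 x).toNNReal : ℝ≥0∞) := by
    funext x; rw [gaussianPDF]; rfl
  rw [this, integral_withDensity_eq_integral_smul hm]
  congr 1
  funext x
  have hx : ((gaussianPDFReal 0 1 x).toNNReal : ℝ) = gaussianPDFReal 0 1 x :=
    Real.coe_toNNReal _ (gaussianPDFReal_nonneg 0 1 x)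
  rw [NNReal.smul_def, smul_eq_mul, hx]

lemma aux_gauss_integrable (k : ℕ) :
    Integrable (fun x : ℝ => x ^ k) (gaussianReal 0 1) := by
  rw [gaussianReal_of_var_ne_zero 0 one_ne_zero]
  have hm : Measurable fun x => (gaussianPDFReal 0 1 x).toNNReal :=
    (measurable_gaussianPDFReal 0 1).real_toNNReal
  have h1 : gaussianPDF 0 1 = fun x => ((gaussianPDFReal 0 1 x).toNNReal : ℝ≥0∞) := by
    funext x; rw [gaussianPDF]; rfl
  rw [h1, integrable_withDensity_iff_integrable_smul hm]
  have : (fun x : ℝ => (gaussianPDFReal 0 1 x).toNNReal • (x ^ k))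
      = fun x : ℝ => (Real.sqrt (2 * π))⁻¹ * (x ^ k * Real.exp (-(2⁻¹ : ℝ) * x ^ 2)) := by
    funext x
    have hx : ((gaussianPDFReal 0 1 x).toNNReal : ℝ) = gaussianPDFReal 0 1 x :=
      Real.coe_toNNReal _ (gaussianPDFReal_nonneg 0 1 x)
    rw [NNReal.smul_def, smul_eq_mul, hx, aux_pdf]
    ring
  rw [this]
  exact (aux_int_pow_exp k).const_mul _

/-- moments of the standard gaussian -/
def gmoment (k : ℕ) : ℝ := ∫ x, x ^ k ∂(gaussianReal 0 1)

lemma gmoment_eq (k : ℕ) :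
    gmoment k = (Real.sqrt (2 * π))⁻¹ * ∫ x : ℝ, x ^ k * Real.exp (-(2⁻¹ : ℝ) * x ^ 2) := by
  rw [gmoment, aux_gauss_integral]
  rw [← MeasureTheory.integral_const_mul]
  congr 1
  funext x
  rw [aux_pdf]
  ring

lemma sqrt_two_pi_ne : Real.sqrt (2 * π) ≠ 0 := by
  positivity

lemma aux_J0' : ∫ x : ℝ, x ^ 0 * Real.exp (-(2⁻¹ : ℝ) * x ^ 2) = Real.sqrt (2 * π) := by
  simpa using aux_J0

lemma aux_J2 : ∫ x : ℝ, x ^ 2 * Real.exp (-(2⁻¹ : ℝ) * x ^ 2) = Real.sqrt (2 * π) := by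
  have h := aux_J_rec 0
  rw [aux_J0'] at h
  rw [show ((0:ℕ):ℝ) + 1 = 1 by norm_num, one_mul] at h
  exact h

lemma aux_J4 : ∫ x : ℝ, x ^ 4 * Real.exp (-(2⁻¹ : ℝ) * x ^ 2) = 3 * Real.sqrt (2 * π) := by
  have h := aux_J_rec 2
  rw [aux_J2, show ((2:ℕ):ℝ) + 1 = 3 by norm_num] at h
  exact h

lemma aux_J6 : ∫ x : ℝ, x ^ 6 * Real.exp (-(2⁻¹ : ℝ) * x ^ 2) = 15 * Real.sqrt (2 * π) := by
  have h := aux_J_rec 4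
  rw [aux_J4, show ((4:ℕ):ℝ) + 1 = 5 by norm_num, show (5:ℝ) * (3 * Real.sqrt (2*π)) = 15 * Real.sqrt (2*π) by ring] at h
  exact h

lemma aux_J3 : ∫ x : ℝ, x ^ 3 * Real.exp (-(2⁻¹ : ℝ) * x ^ 2) = 0 := by
  have h := aux_J_rec 1
  rw [aux_J1, mul_zero] at h
  exact h

lemma gmoment_zero : gmoment 0 = 1 := by
  rw [gmoment_eq 0, aux_J0', inv_mul_cancel₀ sqrt_two_pi_ne]
lemma gmoment_one : gmoment 1 = 0 := by rw [gmoment_eq 1, aux_J1, mul_zero]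
lemma gmoment_two : gmoment 2 = 1 := by
  rw [gmoment_eq 2, aux_J2, inv_mul_cancel₀ sqrt_two_pi_ne]
lemma gmoment_three : gmoment 3 = 0 := by rw [gmoment_eq 3, aux_J3, mul_zero]
lemma gmoment_four : gmoment 4 = 3 := by
  rw [gmoment_eq 4, aux_J4, ← mul_assoc, mul_comm _ (3:ℝ), mul_assoc,
    inv_mul_cancel₀ sqrt_two_pi_ne, mul_one]
lemma gmoment_six : gmoment 6 = 15 := by
  rw [gmoment_eq 6, aux_J6, ← mul_assoc, mul_comm _ (15:ℝ), mul_assoc,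
    inv_mul_cancel₀ sqrt_two_pi_ne, mul_one]

theorem my_integrable_pi_prod {n : ℕ} {E : Fin n → Type*} [∀ i, MeasurableSpace (E i)]
    (μ : ∀ i, Measure (E i)) [∀ i, SigmaFinite (μ i)] {f : ∀ i, E i → ℝ}
    (hf : ∀ i, Integrable (f i) (μ i)) :
    Integrable (fun x => ∏ i, f i (x i)) (Measure.pi μ) := by
  induction n with
  | zero =>
      simp only [Finset.univ_eq_empty, Finset.prod_empty]
      rw [integrable_const_iff]
      simp [Measure.pi_empty_univ]
      exact ⟨by simp [Measure.pi_empty_univ]⟩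
  | succ n n_ih =>
      have := ((measurePreserving_piFinSuccAbove μ 0).symm)
      rw [← this.integrable_comp_emb (MeasurableEquiv.measurableEmbedding _)]
      simp_rw [MeasurableEquiv.piFinSuccAbove_symm_apply, Fin.insertNthEquiv,
        Fin.prod_univ_succ, Fin.insertNth_zero]
      simp only [Fin.zero_succAbove, Function.comp_def, Fin.cons_zero, Fin.cons_succ,
        Equiv.coe_fn_mk]
      have : Integrable (fun (x : (j : Fin n) → E (Fin.succ j)) ↦ ∏ j, f (Fin.succ j) (x j))
          (Measure.pi fun j => μ (Fin.succ j)) := n_ih _ (fun i ↦ hf _)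
      exact Integrable.mul_prod (hf 0) this

theorem my_integral_pi_prod {n : ℕ} {E : Fin n → Type*} [∀ i, MeasurableSpace (E i)]
    (μ : ∀ i, Measure (E i)) [∀ i, SigmaFinite (μ i)] (f : ∀ i, E i → ℝ) :
    ∫ x, ∏ i, f i (x i) ∂(Measure.pi μ) = ∏ i, ∫ x, f i x ∂(μ i) := by
  induction n with
  | zero =>
      simp only [Finset.univ_eq_empty, Finset.prod_empty, integral_const,
        Measure.pi_empty_univ, ENNReal.toReal_one, smul_eq_mul, mul_one, one_smul, measureReal_def]
  | succ n n_ih =>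
      calc
        _ = ∫ x : E 0 × ((i : Fin n) → E (Fin.succ i)),
            f 0 x.1 * ∏ i : Fin n, f (Fin.succ i) (x.2 i)
            ∂((μ 0).prod (Measure.pi fun i => μ (Fin.succ i))) := by
          rw [← ((measurePreserving_piFinSuccAbove μ 0).symm).integral_comp']
          simp_rw [MeasurableEquiv.piFinSuccAbove_symm_apply, Fin.insertNthEquiv,
            Fin.prod_univ_succ, Fin.insertNth_zero, Equiv.coe_fn_mk, Fin.cons_succ]
          rfl
        _ = (∫ x, f 0 x ∂(μ 0)) * ∏ i : Fin n, ∫ (x : E (Fin.succ i)), f (Fin.succ i) x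
            ∂(μ (Fin.succ i)) := by
          rw [← n_ih, ← integral_prod_mul]
        _ = ∏ i, ∫ x, f i x ∂(μ i) := by rw [Fin.prod_univ_succ]

variable {m r : ℕ}

lemma gauss_prod_integrable (f : Fin m → Fin r → ℝ → ℝ)
    (hf : ∀ i j, Integrable (f i j) (gaussianReal 0 1)) :
    Integrable (fun U : Matrix (Fin m) (Fin r) ℝ => ∏ i, ∏ j, f i j (U i j))
      (gaussMat m r) :=
  my_integrable_pi_prod (E := fun _ : Fin m => (Fin r → ℝ))
    (fun _ : Fin m => Measure.pi fun _ : Fin r => gaussianReal 0 1)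
    (f := fun i x => ∏ j, f i j (x j))
    (fun i => my_integrable_pi_prod (E := fun _ : Fin r => ℝ) _
      (f := fun j y => f i j y) (fun j => hf i j))

lemma gauss_prod_integral (f : Fin m → Fin r → ℝ → ℝ) :
    ∫ U, (∏ i, ∏ j, f i j (U i j)) ∂(gaussMat m r)
      = ∏ i, ∏ j, ∫ x, f i j x ∂(gaussianReal 0 1) := by
  have h := my_integral_pi_prod
    (fun _ : Fin m => Measure.pi fun _ : Fin r => gaussianReal 0 1)
    (fun i (x : Fin r → ℝ) => ∏ j, f i j (x j))
  rw [show (∏ i, ∫ x : Fin r → ℝ, ∏ j, f i j (x j)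
        ∂(Measure.pi fun _ : Fin r => gaussianReal 0 1))
      = ∏ i, ∏ j, ∫ x, f i j x ∂(gaussianReal 0 1) from
    Finset.prod_congr rfl fun i _ => my_integral_pi_prod _ _] at h
  exact h

lemma mono_integrable (e : Fin m × Fin r → ℕ) :
    Integrable (fun U : Matrix (Fin m) (Fin r) ℝ => ∏ p : Fin m × Fin r, U p.1 p.2 ^ e p)
      (gaussMat m r) := by
  simp_rw [Fintype.prod_prod_type]
  exact gauss_prod_integrable _ fun i j => aux_gauss_integrable _

lemma mono_integral (e : Fin m × Fin r → ℕ) :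
    ∫ U, (∏ p : Fin m × Fin r, U p.1 p.2 ^ e p) ∂(gaussMat m r)
      = ∏ p : Fin m × Fin r, gmoment (e p) := by
  simp_rw [Fintype.prod_prod_type]
  rw [gauss_prod_integral (fun i j x => x ^ e (i, j))]
  rfl

lemma prod_single_exp (U : Matrix (Fin m) (Fin r) ℝ) (p : Fin m × Fin r) (k : ℕ) :
    (∏ a : Fin m × Fin r, U a.1 a.2 ^ (if a = p then k else 0)) = U p.1 p.2 ^ k := by
  have h : ∀ a : Fin m × Fin r,
      U a.1 a.2 ^ (if a = p then k else 0) = (if a = p then U a.1 a.2 ^ k else 1) := by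
    intro a; split <;> simp
  rw [Finset.prod_congr rfl fun a _ => h a, Finset.prod_ite_eq']
  simp

lemma single_integrable (p : Fin m × Fin r) (k : ℕ) :
    Integrable (fun U : Matrix (Fin m) (Fin r) ℝ => U p.1 p.2 ^ k) (gaussMat m r) := by
  have h := mono_integrable (m := m) (r := r) (fun a => if a = p then k else 0)
  simpa only [prod_single_exp] using h

lemma single_integral (p : Fin m × Fin r) (k : ℕ) :
    ∫ U, U p.1 p.2 ^ k ∂(gaussMat m r) = gmoment k := by
  have h := mono_integral (m := m) (r := r) (fun a => if a = p then k else 0)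
  simp only [prod_single_exp] at h
  rw [h]
  have h2 : ∀ a : Fin m × Fin r,
      gmoment (if a = p then k else 0) = (if a = p then gmoment k else 1) := by
    intro a; split <;> simp [gmoment_zero]
  rw [Finset.prod_congr rfl fun a _ => h2 a, Finset.prod_ite_eq']
  simp

lemma key_eq (U : Matrix (Fin m) (Fin r) ℝ) (p q c : Fin m × Fin r) :
    U p.1 p.2 * U q.1 q.2 * U c.1 c.2 ^ 2
      = ∏ a : Fin m × Fin r, U a.1 a.2
          ^ ((if a = p then 1 else 0) + ((if a = q then 1 else 0) + (if a = c then 2 else 0))) := by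
  simp only [pow_add, Finset.prod_mul_distrib, prod_single_exp, pow_one]
  ring

lemma key_integrable (p q c : Fin m × Fin r) :
    Integrable (fun U : Matrix (Fin m) (Fin r) ℝ => U p.1 p.2 * U q.1 q.2 * U c.1 c.2 ^ 2)
      (gaussMat m r) := by
  simp_rw [key_eq]
  exact mono_integrable _

lemma key_integral (p q c : Fin m × Fin r) :
    ∫ U, U p.1 p.2 * U q.1 q.2 * U c.1 c.2 ^ 2 ∂(gaussMat m r)
      = if p = q then (if c = p then 3 else 1) else 0 := by
  simp_rw [key_eq, mono_integral]
  by_cases hpq : p = q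
  · subst hpq
    by_cases hcp : c = p
    · subst hcp
      rw [if_pos rfl, if_pos rfl]
      have h : ∀ a : Fin m × Fin r,
          gmoment ((if a = c then 1 else 0) + ((if a = c then 1 else 0) + (if a = c then 2 else 0)))
            = (if a = c then gmoment 4 else 1) := by
        intro a; by_cases h' : a = c <;> simp [h', gmoment_zero] <;> norm_num
      rw [Finset.prod_congr rfl fun a _ => h a, Finset.prod_ite_eq']
      simp [gmoment_four]
    · rw [if_pos rfl, if_neg hcp, Finset.prod_eq_one]
      intro a _
      by_cases h1 : a = p <;> by_cases h2 : a = c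
      · exact absurd (h2.symm.trans h1) hcp
      · simp [h1, h2, show ¬p = c from fun h => hcp h.symm, gmoment_two]
      · simp [h1, h2, hcp, gmoment_two]
      · simp [h1, h2, gmoment_zero]
  · rw [if_neg hpq, Finset.prod_eq_zero (Finset.mem_univ p)]
    rw [if_pos rfl, if_neg (fun h => hpq h)]
    by_cases h : p = c <;> simp [h, gmoment_one, gmoment_three]

lemma six_integrable :
    Integrable (fun U : Matrix (Fin m) (Fin r) ℝ => ∑ p : Fin m × Fin r, U p.1 p.2 ^ 6)
      (gaussMat m r) :=
  integrable_finset_sum _ fun p _ => single_integrable p 6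

lemma six_integral :
    ∫ U, (∑ p : Fin m × Fin r, U p.1 p.2 ^ 6) ∂(gaussMat m r) = 15 * (m * r : ℕ) := by
  rw [integral_finset_sum _ fun p _ => single_integrable p 6]
  simp [single_integral, gmoment_six, Finset.sum_const, mul_comm]

lemma cross_pt (A U : Matrix (Fin m) (Fin r) ℝ) :
    (∑ p : Fin m × Fin r, A p.1 p.2 * U p.1 p.2) ^ 2
        * (∑ c : Fin m × Fin r, U c.1 c.2 ^ 2)
      = ∑ p : Fin m × Fin r, ∑ q : Fin m × Fin r, ∑ c : Fin m × Fin r,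
          (A p.1 p.2 * A q.1 q.2) * (U p.1 p.2 * U q.1 q.2 * U c.1 c.2 ^ 2) := by
  rw [sq, Finset.sum_mul_sum, Finset.sum_mul]
  refine Finset.sum_congr rfl fun p _ => ?_
  rw [Finset.sum_mul]
  refine Finset.sum_congr rfl fun q _ => ?_
  rw [Finset.mul_sum]
  refine Finset.sum_congr rfl fun c _ => ?_
  ring

lemma cross_integrable (A : Matrix (Fin m) (Fin r) ℝ) :
    Integrable (fun U : Matrix (Fin m) (Fin r) ℝ =>
      (∑ p : Fin m × Fin r, A p.1 p.2 * U p.1 p.2) ^ 2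
        * (∑ c : Fin m × Fin r, U c.1 c.2 ^ 2)) (gaussMat m r) := by
  simp_rw [cross_pt]
  exact integrable_finset_sum _ fun p _ => integrable_finset_sum _ fun q _ =>
    integrable_finset_sum _ fun c _ => (key_integrable p q c).const_mul _

lemma cross_integral (A : Matrix (Fin m) (Fin r) ℝ) :
    ∫ U, ((∑ p : Fin m × Fin r, A p.1 p.2 * U p.1 p.2) ^ 2
        * (∑ c : Fin m × Fin r, U c.1 c.2 ^ 2)) ∂(gaussMat m r)
      = ((m * r : ℕ) + 2) * ∑ p : Fin m × Fin r, A p.1 p.2 ^ 2 := by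
  simp_rw [cross_pt]
  rw [integral_finset_sum _ fun p _ => integrable_finset_sum _ fun q _ =>
    integrable_finset_sum _ fun c _ => (key_integrable p q c).const_mul _]
  have h1 : ∀ p : Fin m × Fin r,
      (∫ U, (∑ q : Fin m × Fin r, ∑ c : Fin m × Fin r,
        (A p.1 p.2 * A q.1 q.2) * (U p.1 p.2 * U q.1 q.2 * U c.1 c.2 ^ 2)) ∂(gaussMat m r))
      = A p.1 p.2 ^ 2 * ((m * r : ℕ) + 2) := by
    intro p
    rw [integral_finset_sum _ fun q _ =>
      integrable_finset_sum _ fun c _ => (key_integrable p q c).const_mul _]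
    have h2 : ∀ q : Fin m × Fin r,
        (∫ U, (∑ c : Fin m × Fin r,
          (A p.1 p.2 * A q.1 q.2) * (U p.1 p.2 * U q.1 q.2 * U c.1 c.2 ^ 2)) ∂(gaussMat m r))
        = if p = q then A p.1 p.2 * A q.1 q.2 * ((m * r : ℕ) + 2) else 0 := by
      intro q
      rw [integral_finset_sum _ fun c _ => (key_integrable p q c).const_mul _]
      have h3 : ∀ c : Fin m × Fin r,
          (∫ U, (A p.1 p.2 * A q.1 q.2) * (U p.1 p.2 * U q.1 q.2 * U c.1 c.2 ^ 2) ∂(gaussMat m r))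
          = (A p.1 p.2 * A q.1 q.2) * (if p = q then (if c = p then 3 else 1) else 0) := by
        intro c
        rw [MeasureTheory.integral_const_mul, key_integral]
      rw [Finset.sum_congr rfl fun c _ => h3 c]
      by_cases hpq : p = q
      · simp only [if_pos hpq, ← Finset.mul_sum]
        congr 1
        have h4 : ∀ c : Fin m × Fin r,
            (if c = p then (3:ℝ) else 1) = 1 + (if c = p then 2 else 0) := by
          intro c; split <;> norm_num
        rw [Finset.sum_congr rfl fun c _ => h4 c, Finset.sum_add_distrib,
          Finset.sum_const, Finset.sum_ite_eq' Finset.univ p fun _ => (2:ℝ)]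
        simp [Fintype.card_prod, mul_comm]
      · simp [hpq]
    rw [Finset.sum_congr rfl fun q _ => h2 q, Finset.sum_ite_eq Finset.univ p
      fun q => A p.1 p.2 * A q.1 q.2 * ((m * r : ℕ) + 2)]
    simp [sq]
  rw [Finset.sum_congr rfl fun p _ => h1 p, ← Finset.sum_mul]
  ring

variable {m r : ℕ}

lemma finner_eq (A H : Matrix (Fin m) (Fin r) ℝ) :
    finner A H = ∑ p : Fin m × Fin r, A p.1 p.2 * H p.1 p.2 := by
  rw [Fintype.sum_prod_type]
  simp [finner, Matrix.trace, Matrix.diag, Matrix.mul_apply, Matrix.transpose_apply]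

lemma finnerCLM_apply (A H : Matrix (Fin m) (Fin r) ℝ) : finnerCLM A H = finner A H := rfl

lemma finner_smul (A H : Matrix (Fin m) (Fin r) ℝ) (t : ℝ) :
    finner A (t • H) = t * finner A H := by
  simp only [finner_eq, Matrix.smul_apply, smul_eq_mul, Finset.mul_sum]
  exact Finset.sum_congr rfl fun p _ => by ring

lemma norm_sq_eq (A : Matrix (Fin m) (Fin r) ℝ) :
    ‖A‖ ^ 2 = ∑ p : Fin m × Fin r, A p.1 p.2 ^ 2 := by
  rw [Matrix.frobenius_norm_def, Fintype.sum_prod_type]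
  have h0 : (0:ℝ) ≤ ∑ i, ∑ j, ‖A i j‖ ^ (2:ℝ) := by
    refine Finset.sum_nonneg fun i _ => Finset.sum_nonneg fun j _ => ?_
    positivity
  rw [← Real.rpow_natCast (_ ^ (1/2 : ℝ)) 2, ← Real.rpow_mul h0]
  norm_num

lemma finnerCLM_sub (X Y : Matrix (Fin m) (Fin r) ℝ) :
    finnerCLM X - finnerCLM Y = finnerCLM (X - Y) := by
  ext H
  simp only [ContinuousLinearMap.sub_apply, finnerCLM_apply, finner_eq]
  rw [← Finset.sum_sub_distrib]
  exact Finset.sum_congr rfl fun p _ => by simp [Matrix.sub_apply]; ring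

lemma finnerCLM_opnorm (X H : Matrix (Fin m) (Fin r) ℝ) : ‖finner X H‖ ≤ ‖X‖ * ‖H‖ := by
  rw [Real.norm_eq_abs, finner_eq]
  have hcs := Finset.sum_mul_sq_le_sq_mul_sq Finset.univ
    (fun p : Fin m × Fin r => X p.1 p.2) (fun p : Fin m × Fin r => H p.1 p.2)
  rw [← norm_sq_eq, ← norm_sq_eq] at hcs
  have h1 : |∑ p : Fin m × Fin r, X p.1 p.2 * H p.1 p.2| ^ 2 ≤ (‖X‖ * ‖H‖) ^ 2 := by
    rw [sq_abs]; calc _ ≤ ‖X‖^2 * ‖H‖^2 := hcs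
    _ = (‖X‖*‖H‖)^2 := by ring
  have h2 := Real.sqrt_le_sqrt h1
  rwa [Real.sqrt_sq_eq_abs, Real.sqrt_sq (mul_nonneg (norm_nonneg X) (norm_nonneg H)),
    abs_abs] at h2

lemma descent {G : Matrix (Fin m) (Fin r) ℝ → ℝ} {Lt : ℝ}
    {gradG : Matrix (Fin m) (Fin r) ℝ → Matrix (Fin m) (Fin r) ℝ}
    (hderiv : ∀ B, HasFDerivAt G (finnerCLM (gradG B)) B)
    (hlip : ∀ B₁ B₂, ‖gradG B₁ - gradG B₂‖ ≤ Lt * ‖B₁ - B₂‖)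
    (hLt : 0 ≤ Lt) (B H : Matrix (Fin m) (Fin r) ℝ) :
    |G (B + H) - G B - finner (gradG B) H| ≤ Lt * ‖H‖ ^ 2 := by
  have hseg : ∀ z ∈ segment ℝ B (B + H), ‖z - B‖ ≤ ‖H‖ := by
    rintro z ⟨a, b, ha, hb, hab, rfl⟩
    have ha' : a = 1 - b := by linarith
    subst ha'
    have hz : (1 - b) • B + b • (B + H) - B = b • H := by module
    rw [hz, norm_smul, Real.norm_eq_abs, abs_of_nonneg hb]
    nlinarith [norm_nonneg H]
  have hmv := Convex.norm_image_sub_le_of_norm_hasFDerivWithin_le'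
    (f := G) (f' := fun z => finnerCLM (gradG z)) (φ := finnerCLM (gradG B))
    (C := Lt * ‖H‖) (s := segment ℝ B (B + H))
    (fun z _ => (hderiv z).hasFDerivWithinAt)
    (fun z hz => by
      refine ContinuousLinearMap.opNorm_le_bound _ (mul_nonneg hLt (norm_nonneg H)) fun K => ?_
      show ‖finner (gradG z) K - finner (gradG B) K‖ ≤ _
      rw [← finnerCLM_apply, ← finnerCLM_apply, ← ContinuousLinearMap.sub_apply, finnerCLM_sub,
        finnerCLM_apply]
      refine (finnerCLM_opnorm _ K).trans (mul_le_mul_of_nonneg_right ((hlip z B).trans ?_)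
        (norm_nonneg K))
      exact mul_le_mul_of_nonneg_left (hseg z hz) hLt)
    (convex_segment _ _) (left_mem_segment ℝ B (B + H)) (right_mem_segment ℝ B (B + H))
  rw [add_sub_cancel_left] at hmv
  calc |G (B + H) - G B - finner (gradG B) H| ≤ (Lt * ‖H‖) * ‖H‖ := hmv
  _ = Lt * ‖H‖ ^ 2 := by ring

lemma harr_top : ∀ X N L e : ℝ, 0 ≤ X → 1 ≤ N →
    2 * ((N + 2) * X) + (2 * L ^ 2 * e ^ 2 * N ^ 2) * (15 * N)
      ≤ 6 * N * X + 64 * L ^ 2 * N ^ 3 * e ^ 2 := by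
  intro X N L e hX hN
  nlinarith [mul_nonneg (sub_nonneg.mpr hN) hX,
    mul_nonneg (mul_nonneg (sq_nonneg L) (sq_nonneg e))
      (pow_nonneg (by linarith : (0:ℝ) ≤ N) 3)]


end Aux

/-- second moment bound for the randomized finite-difference estimator:
`E_U‖∇̂G(B)‖_F² ≤ 6mr‖∇G(B)‖_F² + 64L̃²m³r³ε²`. -/
theorem stmt_7 {m r : ℕ} (hm : 0 < m) (hr : 0 < r)
    (G : Matrix (Fin m) (Fin r) ℝ → ℝ) (Lt : ℝ)
    (gradG : Matrix (Fin m) (Fin r) ℝ → Matrix (Fin m) (Fin r) ℝ)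
    (hderiv : ∀ B, HasFDerivAt G (finnerCLM (gradG B)) B)
    (hlip : ∀ B₁ B₂, ‖gradG B₁ - gradG B₂‖ ≤ Lt * ‖B₁ - B₂‖)
    (ε : ℝ) (hε : 0 < ε) (B : Matrix (Fin m) (Fin r) ℝ) :
    ∫ U, ‖((G (B + ε • U) - G (B - ε • U)) / (2 * ε)) • U‖ ^ 2 ∂gaussMat m r ≤
      6 * (m : ℝ) * (r : ℝ) * ‖gradG B‖ ^ 2 +
        64 * Lt ^ 2 * (m : ℝ) ^ 3 * (r : ℝ) ^ 3 * ε ^ 2 := by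
  -- Lt is nonnegative
  have hLt : 0 ≤ Lt := by
    by_contra hneg
    push_neg at hneg
    set Y : Matrix (Fin m) (Fin r) ℝ := Matrix.of fun _ _ => (1:ℝ) with hY
    have hYne : Y ≠ 0 := by
      intro h
      have := congrFun (congrFun h ⟨0, hm⟩) ⟨0, hr⟩
      simp [hY] at this
    have hpos : 0 < ‖(0 : Matrix (Fin m) (Fin r) ℝ) - Y‖ := by
      rw [zero_sub, norm_neg]
      exact norm_pos_iff.mpr hYne
    have h1 := (norm_nonneg (gradG 0 - gradG Y)).trans (hlip 0 Y)
    nlinarith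
  set n : ℝ := ((m * r : ℕ) : ℝ) with hn
  have hn1 : (1 : ℝ) ≤ n := by
    rw [hn]
    exact_mod_cast Nat.one_le_iff_ne_zero.mpr (Nat.mul_ne_zero hm.ne' hr.ne')
  set g := gradG B with hg
  set T : Matrix (Fin m) (Fin r) ℝ → ℝ :=
    fun U => ∑ p : Fin m × Fin r, g p.1 p.2 * U p.1 p.2 with hT
  set S : Matrix (Fin m) (Fin r) ℝ → ℝ :=
    fun U => ∑ p : Fin m × Fin r, U p.1 p.2 ^ 2 with hS
  let q : Matrix (Fin m) (Fin r) ℝ → ℝ :=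
    fun U => (G (B + ε • U) - G (B - ε • U)) / (2 * ε)
  have hqdef : ∀ U, q U = (G (B + ε • U) - G (B - ε • U)) / (2 * ε) := fun _ => rfl
  have hS0 : ∀ U, 0 ≤ S U := fun U => Finset.sum_nonneg fun p _ => sq_nonneg _
  set F : Matrix (Fin m) (Fin r) ℝ → ℝ :=
    fun U => 2 * ((T U) ^ 2 * S U)
      + (2 * Lt ^ 2 * ε ^ 2 * n ^ 2) * (∑ p : Fin m × Fin r, U p.1 p.2 ^ 6) with hF
  -- pointwise bound
  have hpt : ∀ U, ‖q U • U‖ ^ 2 ≤ F U := by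
    intro U
    have hnormU : ‖U‖ ^ 2 = S U := norm_sq_eq U
    have hsm : ‖q U • U‖ ^ 2 = (q U) ^ 2 * S U := by
      rw [norm_smul, mul_pow, Real.norm_eq_abs, sq_abs, hnormU]
    -- step 1: |q U - T U| ≤ Lt * ε * S U
    have hstep1 : |q U - T U| ≤ Lt * ε * S U := by
      have hsU : ‖ε • U‖ ^ 2 = ε ^ 2 * S U := by
        rw [norm_smul, mul_pow, Real.norm_eq_abs, sq_abs, hnormU]
      have d1 := descent hderiv hlip hLt B (ε • U)
      have d2 := descent hderiv hlip hLt B (-(ε • U))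
      rw [show B + -(ε • U) = B - ε • U from (sub_eq_add_neg B (ε • U)).symm,
        norm_neg, hsU] at d2
      rw [hsU] at d1
      have hf1 : finner g (ε • U) = ε * T U := by rw [finner_smul, hT, finner_eq]
      have hf2 : finner g (-(ε • U)) = -(ε * T U) := by
        rw [show -(ε • U) = (-ε) • U by rw [neg_smul], finner_smul, hT, finner_eq]
        ring
      rw [hf1] at d1
      rw [hf2] at d2
      have ha := abs_le.mp d1
      have hb := abs_le.mp d2
      have hq' : q U - T U
          = ((G (B + ε • U) - G B - ε * T U) - (G (B - ε • U) - G B - -(ε * T U)))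
            / (2 * ε) := by
        rw [hqdef]
        field_simp
        ring
      rw [hq', abs_div, abs_of_pos (by positivity : (0:ℝ) < 2 * ε)]
      rw [div_le_iff₀ (by positivity : (0:ℝ) < 2 * ε)]
      have h2K : |(G (B + ε • U) - G B - ε * T U) - (G (B - ε • U) - G B - -(ε * T U))|
          ≤ 2 * (Lt * (ε ^ 2 * S U)) := by
        apply abs_le.mpr
        constructor <;> [skip; skip] <;> cases ha <;> cases hb <;> linarith
      calc |(G (B + ε • U) - G B - ε * T U) - (G (B - ε • U) - G B - -(ε * T U))|
          ≤ 2 * (Lt * (ε ^ 2 * S U)) := h2K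
        _ = Lt * ε * S U * (2 * ε) := by ring
    -- step 2
    have hsq : (q U - T U) ^ 2 ≤ (Lt * ε * S U) ^ 2 := by
      have h := abs_le.mp hstep1
      nlinarith [h.1, h.2]
    have hq2 : (q U) ^ 2 ≤ 2 * (T U) ^ 2 + 2 * (Lt * ε * S U) ^ 2 := by
      nlinarith [sq_nonneg (q U - 2 * T U), hsq]
    have hmul : (q U) ^ 2 * S U
        ≤ 2 * ((T U) ^ 2 * S U) + 2 * Lt ^ 2 * ε ^ 2 * (S U) ^ 3 := by
      have := mul_le_mul_of_nonneg_right hq2 (hS0 U)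
      nlinarith [this]
    -- step 3: power mean
    have hpm : (S U) ^ 3 ≤ n ^ 2 * ∑ p : Fin m × Fin r, U p.1 p.2 ^ 6 := by
      have h := pow_sum_div_card_le_sum_pow (s := Finset.univ)
        (f := fun p : Fin m × Fin r => U p.1 p.2 ^ 2) (fun p _ => sq_nonneg _) 2
      have hcard : ((Finset.univ : Finset (Fin m × Fin r)).card : ℝ) = n := by
        rw [hn]
        simp [Finset.card_univ]
      have hcardpos : (0:ℝ) < ((Finset.univ : Finset (Fin m × Fin r)).card : ℝ) := by
        rw [hcard]; linarith
      rw [div_le_iff₀ (by positivity : (0:ℝ) < ((Finset.univ : Finset (Fin m × Fin r)).card : ℝ) ^ 2)] at h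
      calc (S U) ^ 3 = (∑ p : Fin m × Fin r, U p.1 p.2 ^ 2) ^ (2+1) := by rw [hS]
        _ ≤ (∑ p : Fin m × Fin r, (U p.1 p.2 ^ 2) ^ (2+1))
            * ((Finset.univ : Finset (Fin m × Fin r)).card : ℝ) ^ 2 := h
        _ = n ^ 2 * ∑ p : Fin m × Fin r, U p.1 p.2 ^ 6 := by
          rw [hcard, mul_comm]
          congr 1
          exact Finset.sum_congr rfl fun p _ => by ring
    rw [hsm]
    have h5 : 2 * Lt ^ 2 * ε ^ 2 * (S U) ^ 3
        ≤ 2 * Lt ^ 2 * ε ^ 2 * (n ^ 2 * ∑ p : Fin m × Fin r, U p.1 p.2 ^ 6) := by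
      apply mul_le_mul_of_nonneg_left hpm (by positivity)
    show q U ^ 2 * S U ≤ 2 * ((T U) ^ 2 * S U)
      + (2 * Lt ^ 2 * ε ^ 2 * n ^ 2) * (∑ p : Fin m × Fin r, U p.1 p.2 ^ 6)
    nlinarith [hmul, h5]
  -- integrability of F
  have hFint : Integrable F (gaussMat m r) := by
    rw [hF]
    exact ((cross_integrable g).const_mul 2).add (six_integrable.const_mul _)
  -- integral of F
  have hFval : ∫ U, F U ∂(gaussMat m r)
      = 2 * ((n + 2) * ∑ p : Fin m × Fin r, g p.1 p.2 ^ 2)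
        + (2 * Lt ^ 2 * ε ^ 2 * n ^ 2) * (15 * n) := by
    rw [hF, integral_add ((cross_integrable g).const_mul 2) (six_integrable.const_mul _),
      MeasureTheory.integral_const_mul, MeasureTheory.integral_const_mul,
      cross_integral g, six_integral]
  have hmono := integral_mono_of_nonneg
    (f := fun U : Matrix (Fin m) (Fin r) ℝ =>
      ‖((G (B + ε • U) - G (B - ε • U)) / (2 * ε)) • U‖ ^ 2) (g := F)
    (ae_of_all _ fun U => by positivity) hFint (ae_of_all _ hpt)
  have hgn : ∑ p : Fin m × Fin r, g p.1 p.2 ^ 2 = ‖g‖ ^ 2 := (norm_sq_eq g).symm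
  rw [hFval, hgn] at hmono
  have hnm : n = (m : ℝ) * (r : ℝ) := by rw [hn]; push_cast; ring
  rw [hnm] at hmono hn1
  have h2 := harr_top (‖g‖ ^ 2) ((m:ℝ) * (r:ℝ)) Lt ε (sq_nonneg _) hn1
  exact (hmono.trans h2).trans_eq (by ring)
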